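/- If F : X ⇉ Y has the Aubin property around (x̄, ȳ) ∈ Gr F and is proto-differentiable at x̄ relative to ȳ (i.e., D_U F(x̄,ȳ) = D_B F(x̄,ȳ)), then F is semi-differentiable at x̄ relative to ȳ (i.e., D_D F(x̄,ȳ) = D_B F(x̄,ȳ)). -/

import Mathlib

open Filter Topology Pointwise

section Defs

variable {X Y : Type*} [NormedAddCommGroup X] [NormedSpace ℝ X]
  [NormedAddCommGroup Y] [NormedSpace ℝ Y]

/-- A sequence of positive reals tending to zero. -/
def PosToZero (t : ℕ → ℝ) : Prop := (∀ n, 0 < t n) ∧ Tendsto t atTop (𝓝 0)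

/-- First order Bouligand tangent cone. -/
def TB (D : Set X) (x : X) : Set X :=
  {u | ∃ t : ℕ → ℝ, PosToZero t ∧ ∃ w : ℕ → X, Tendsto w atTop (𝓝 u) ∧
    ∀ n, x + t n • w n ∈ D}

/-- First order Ursescu tangent cone. -/
def TU (D : Set X) (x : X) : Set X :=
  {u | ∀ t : ℕ → ℝ, PosToZero t → ∃ w : ℕ → X, Tendsto w atTop (𝓝 u) ∧
    ∀ n, x + t n • w n ∈ D}

/-- Second order Bouligand tangent set. -/
def TB2 (D : Set X) (x x₁ : X) : Set X :=
  {u | ∃ t : ℕ → ℝ, PosToZero t ∧ ∃ w : ℕ → X, Tendsto w atTop (𝓝 u) ∧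
    ∀ n, x + t n • x₁ + (t n) ^ 2 • w n ∈ D}

/-- Second order Ursescu tangent set. -/
def TU2 (D : Set X) (x x₁ : X) : Set X :=
  {u | ∀ t : ℕ → ℝ, PosToZero t → ∃ w : ℕ → X, Tendsto w atTop (𝓝 u) ∧
    ∃ n₀ : ℕ, ∀ n ≥ n₀, x + t n • x₁ + (t n) ^ 2 • w n ∈ D}

/-- Graph of a set-valued map. -/
def SVGraph (F : X → Set Y) : Set (X × Y) := {p | p.2 ∈ F p.1}

/-- First order Bouligand derivative. -/
def DB (F : X → Set Y) (x : X) (y : Y) (u : X) : Set Y :=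
  {v | (u, v) ∈ TB (SVGraph F) (x, y)}

/-- First order Ursescu derivative. -/
def DU (F : X → Set Y) (x : X) (y : Y) (u : X) : Set Y :=
  {v | (u, v) ∈ TU (SVGraph F) (x, y)}

/-- Dini lower derivative. -/
def DD (F : X → Set Y) (x : X) (y : Y) (u : X) : Set Y :=
  {v | ∀ t : ℕ → ℝ, PosToZero t → ∀ w : ℕ → X, Tendsto w atTop (𝓝 u) →
    ∃ v' : ℕ → Y, Tendsto v' atTop (𝓝 v) ∧
      ∃ n₀ : ℕ, ∀ n ≥ n₀, y + t n • v' n ∈ F (x + t n • w n)}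

/-- Aubin property of a set-valued map around a point of its graph. -/
def AubinProperty (F : X → Set Y) (x : X) (y : Y) : Prop :=
  ∃ L > (0:ℝ), ∃ r > (0:ℝ), ∀ x' x'' : X, ‖x' - x‖ ≤ r → ‖x'' - x‖ ≤ r →
    ∀ y' ∈ F x', ‖y' - y‖ ≤ r → ∃ y'' ∈ F x'', ‖y' - y''‖ ≤ L * ‖x' - x''‖

end Defs
theorem semidiff_of_protodiff_aubin {X Y : Type*}
    [NormedAddCommGroup X] [NormedSpace ℝ X] [CompleteSpace X]
    [NormedAddCommGroup Y] [NormedSpace ℝ Y] [CompleteSpace Y]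
    (F : X → Set Y) (xb : X) (yb : Y) (hgr : yb ∈ F xb)
    (haubin : AubinProperty F xb yb)
    (hproto : ∀ u : X, DU F xb yb u = DB F xb yb u) :
    ∀ u : X, DD F xb yb u = DB F xb yb u := by
  intro u
  apply Set.Subset.antisymm
  · -- DD ⊆ DB
    intro v hv
    simp only [DD, Set.mem_setOf_eq] at hv
    simp only [DB, TB, Set.mem_setOf_eq]
    have ht : PosToZero (fun n => (1:ℝ)/(n+1)) :=
      ⟨fun n => by positivity, tendsto_one_div_add_atTop_nhds_zero_nat⟩
    obtain ⟨v', hv', n₀, hmem⟩ := hv _ ht (fun _ => u) tendsto_const_nhds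
    have hshift : Tendsto (fun n : ℕ => n + n₀) atTop atTop := tendsto_add_atTop_nat n₀
    refine ⟨fun n => (1:ℝ)/((n + n₀ : ℕ)+1), ⟨fun n => by positivity, ?_⟩,
      fun n => (u, v' (n + n₀)), ?_, ?_⟩
    · exact tendsto_one_div_add_atTop_nhds_zero_nat.comp hshift
    · exact Tendsto.prodMk_nhds tendsto_const_nhds (hv'.comp hshift)
    · intro n
      have := hmem (n + n₀) (by omega)
      simpa [SVGraph, Prod.smul_def] using this
  · -- DB ⊆ DD
    intro v hv
    rw [← hproto u] at hv
    simp only [DU, TU, Set.mem_setOf_eq] at hv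
    simp only [DD, Set.mem_setOf_eq]
    intro t ht w hw
    obtain ⟨z, hz, hzmem⟩ := hv t ht
    have hz1 : Tendsto (fun n => (z n).1) atTop (𝓝 u) := (continuous_fst.tendsto _).comp hz
    have hz2 : Tendsto (fun n => (z n).2) atTop (𝓝 v) := (continuous_snd.tendsto _).comp hz
    obtain ⟨L, hL, r, hr, haub⟩ := haubin
    have h1 : Tendsto (fun n => ‖t n • (z n).1‖) atTop (𝓝 0) := by
      have h := ht.2.smul hz1
      rw [zero_smul] at h
      simpa [Function.comp_def] using (continuous_norm.tendsto (0:X)).comp h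
    have h2 : Tendsto (fun n => ‖t n • w n‖) atTop (𝓝 0) := by
      have h := ht.2.smul hw
      rw [zero_smul] at h
      simpa [Function.comp_def] using (continuous_norm.tendsto (0:X)).comp h
    have h3 : Tendsto (fun n => ‖t n • (z n).2‖) atTop (𝓝 0) := by
      have h := ht.2.smul hz2
      rw [zero_smul] at h
      simpa [Function.comp_def] using (continuous_norm.tendsto (0:Y)).comp h
    have hev : ∀ᶠ n in atTop, ‖t n • (z n).1‖ ≤ r ∧ ‖t n • w n‖ ≤ r ∧ ‖t n • (z n).2‖ ≤ r := by
      filter_upwards [h1.eventually_le_const hr, h2.eventually_le_const hr,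
        h3.eventually_le_const hr] with n a b c
      exact ⟨a, b, c⟩
    obtain ⟨n₀, hn₀⟩ := eventually_atTop.mp hev
    have key : ∀ n, ∃ vn : Y, (n ≥ n₀ → yb + t n • vn ∈ F (xb + t n • w n)) ∧
        ‖vn - (z n).2‖ ≤ L * ‖(z n).1 - w n‖ := by
      intro n
      by_cases hn : n ≥ n₀
      · obtain ⟨ha, hb, hc⟩ := hn₀ n hn
        have hmem' : yb + t n • (z n).2 ∈ F (xb + t n • (z n).1) := by
          simpa [SVGraph, Prod.smul_def] using hzmem n
        obtain ⟨y'', hy''F, hy''⟩ := haub (xb + t n • (z n).1) (xb + t n • w n)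
          (by simpa using ha) (by simpa using hb) (yb + t n • (z n).2) hmem'
          (by simpa using hc)
        have htn := ht.1 n
        refine ⟨(t n)⁻¹ • (y'' - yb), fun _ => ?_, ?_⟩
        · have he : yb + t n • (t n)⁻¹ • (y'' - yb) = y'' := by
            rw [smul_inv_smul₀ htn.ne']; abel
          rw [he]; exact hy''F
        · have he2 : (t n)⁻¹ • (y'' - yb) - (z n).2 = (t n)⁻¹ • (y'' - (yb + t n • (z n).2)) := by
            rw [smul_sub, smul_sub, smul_add, smul_smul, inv_mul_cancel₀ htn.ne', one_smul]
            abel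
          have heq : ‖(t n)⁻¹ • (y'' - yb) - (z n).2‖ = (t n)⁻¹ * ‖yb + t n • (z n).2 - y''‖ := by
            rw [he2, norm_smul, norm_inv, Real.norm_of_nonneg htn.le, norm_sub_rev]
          have hxx : ‖(xb + t n • (z n).1) - (xb + t n • w n)‖ = t n * ‖(z n).1 - w n‖ := by
            rw [show (xb + t n • (z n).1) - (xb + t n • w n) = t n • ((z n).1 - w n) by
              rw [smul_sub]; abel, norm_smul, Real.norm_of_nonneg htn.le]
          rw [hxx] at hy''
          rw [heq]
          calc (t n)⁻¹ * ‖yb + t n • (z n).2 - y''‖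
              ≤ (t n)⁻¹ * (L * (t n * ‖(z n).1 - w n‖)) := by gcongr
            _ = L * ‖(z n).1 - w n‖ := by field_simp
      · refine ⟨(z n).2, fun h => absurd h hn, ?_⟩
        simp only [sub_self, norm_zero]
        positivity
    choose v' hv'mem hv'bd using key
    refine ⟨v', ?_, n₀, hv'mem⟩
    have hdiff : Tendsto (fun n => v' n - (z n).2) atTop (𝓝 0) := by
      apply squeeze_zero_norm hv'bd
      have hzw : Tendsto (fun n => (z n).1 - w n) atTop (𝓝 0) := by
        simpa using hz1.sub hw
      have h := (tendsto_const_nhds (x := L) (f := atTop)).mul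
        ((continuous_norm.tendsto (0:X)).comp hzw)
      simpa using h
    have := hdiff.add hz2
    simpa using this
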